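/- arXiv:0904.0656 — 3 statements merged into one kernel-verified Lean document; each statement's English description precedes it below -/
import Mathlib

section
/- If p is a polynomial in n variables, homogeneous of degree m, then on any domain D ⊆ ℝ₊ⁿ \ {0}, L((∑_i z_i)^{1−θ₀/2−2m} p(z)) = (∑_i z_i)^{1−θ₀/2−2m} L p(z), where L = ∑_i θ_i ∂_i + 2∑_i z_i ∂_i². -/
open Finset

/-- Partial derivative in the `i`-th coordinate direction. -/
noncomputable def pd {n : ℕ} (i : Fin n) (f : (Fin n → ℝ) → ℝ) (z : Fin n → ℝ) : ℝ :=
  fderiv ℝ f z (Pi.single i 1)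

/-- The generator `L u = ∑ θᵢ ∂ᵢ u + 2 ∑ zᵢ ∂ᵢ² u`. -/
noncomputable def Lop {n : ℕ} (θ : Fin n → ℝ) (f : (Fin n → ℝ) → ℝ) (z : Fin n → ℝ) : ℝ :=
  ∑ i, θ i * pd i f z + 2 * ∑ i, z i * pd i (fun w => pd i f w) z

noncomputable def Dp {n : ℕ} (p : MvPolynomial (Fin n) ℝ) (w : Fin n → ℝ) :
    (Fin n → ℝ) →L[ℝ] ℝ :=
  ∑ i, MvPolynomial.eval w (MvPolynomial.pderiv i p) • ContinuousLinearMap.proj i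

lemma Dp_apply {n : ℕ} (p : MvPolynomial (Fin n) ℝ) (w v : Fin n → ℝ) :
    Dp p w v = ∑ i, MvPolynomial.eval w (MvPolynomial.pderiv i p) * v i := by
  simp [Dp, ContinuousLinearMap.sum_apply]

lemma hasFDerivAt_eval {n : ℕ} (p : MvPolynomial (Fin n) ℝ) (w : Fin n → ℝ) :
    HasFDerivAt (fun v => MvPolynomial.eval v p) (Dp p w) w := by
  induction p using MvPolynomial.induction_on with
  | C a =>
      simp only [MvPolynomial.eval_C]
      refine (hasFDerivAt_const a w).congr_fderiv ?_
      ext v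
      simp [Dp_apply]
  | add p q hp hq =>
      simp only [MvPolynomial.eval_add]
      refine ((hp.add hq).congr_fderiv ?_)
      ext v
      simp [Dp_apply, Finset.sum_add_distrib, add_mul]
  | mul_X p j hp =>
      have hXj := hasFDerivAt_apply (𝕜 := ℝ) j w
      simp only [MvPolynomial.eval_mul, MvPolynomial.eval_X]
      refine ((hp.mul hXj).congr_fderiv ?_)
      ext v
      simp only [ContinuousLinearMap.add_apply, ContinuousLinearMap.smul_apply,
        ContinuousLinearMap.proj_apply, Dp_apply, smul_eq_mul,
        MvPolynomial.pderiv_mul, map_add, MvPolynomial.eval_mul, MvPolynomial.eval_X,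
        MvPolynomial.pderiv_X, Pi.single_apply, add_mul, Finset.sum_add_distrib,
        apply_ite (MvPolynomial.eval w), map_one, map_zero,
        ite_mul, one_mul, zero_mul, mul_ite, mul_zero, Finset.sum_ite_eq,
        Finset.mem_univ, if_true]
      rw [add_comm, Finset.mul_sum]
      congr 1
      · apply Finset.sum_congr rfl; intro i _; ring
      · ring

lemma pd_eval {n : ℕ} (i : Fin n) (p : MvPolynomial (Fin n) ℝ) (w : Fin n → ℝ) :
    pd i (fun v => MvPolynomial.eval v p) w = MvPolynomial.eval w (MvPolynomial.pderiv i p) := by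
  unfold pd
  rw [(hasFDerivAt_eval p w).fderiv, Dp_apply]
  simp [Pi.single_apply, mul_ite, Finset.sum_ite_eq']

noncomputable def So (n : ℕ) : (Fin n → ℝ) →L[ℝ] ℝ := ∑ i, ContinuousLinearMap.proj i

lemma So_apply {n : ℕ} (v : Fin n → ℝ) : So n v = ∑ i, v i := by
  simp [So, ContinuousLinearMap.sum_apply]

lemma hasFDerivAt_sum {n : ℕ} (w : Fin n → ℝ) :
    HasFDerivAt (fun v : Fin n → ℝ => ∑ i, v i) (So n) w := by
  have h := (So n).hasFDerivAt (x := w)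
  refine h.congr_of_eventuallyEq ?_
  filter_upwards with v using (So_apply v).symm

lemma hasFDerivAt_prod {n : ℕ} (a : ℝ) (p : MvPolynomial (Fin n) ℝ) {w : Fin n → ℝ}
    (hw : 0 < ∑ i, w i) :
    HasFDerivAt (fun v : Fin n → ℝ => (∑ i, v i) ^ a * MvPolynomial.eval v p)
      ((MvPolynomial.eval w p) • ((a * (∑ i, w i) ^ (a - 1)) • So n)
        + ((∑ i, w i) ^ a) • Dp p w) w := by
  have h1 : HasFDerivAt (fun v : Fin n → ℝ => (∑ i, v i) ^ a)
      ((a * (∑ i, w i) ^ (a - 1)) • So n) w :=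
    (Real.hasDerivAt_rpow_const (Or.inl hw.ne')).comp_hasFDerivAt w (hasFDerivAt_sum w)
  exact (h1.mul (hasFDerivAt_eval p w)).congr_fderiv (add_comm _ _)

lemma pd_prod {n : ℕ} (i : Fin n) (a : ℝ) (p : MvPolynomial (Fin n) ℝ) {w : Fin n → ℝ}
    (hw : 0 < ∑ i, w i) :
    pd i (fun v : Fin n → ℝ => (∑ j, v j) ^ a * MvPolynomial.eval v p) w
      = MvPolynomial.eval w p * (a * (∑ j, w j) ^ (a - 1))
        + (∑ j, w j) ^ a * MvPolynomial.eval w (MvPolynomial.pderiv i p) := by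
  unfold pd
  rw [(hasFDerivAt_prod a p hw).fderiv]
  simp [Dp_apply, So_apply, Pi.single_apply, mul_ite, Finset.sum_ite_eq']

lemma isOpen_pos_sum (n : ℕ) : IsOpen {w : Fin n → ℝ | 0 < ∑ j, w j} :=
  isOpen_lt continuous_const (continuous_finset_sum _ fun i _ => continuous_apply i)

lemma pd_pd_prod {n : ℕ} (i : Fin n) (a : ℝ) (p : MvPolynomial (Fin n) ℝ) {z : Fin n → ℝ}
    (hz : 0 < ∑ j, z j) :
    pd i (fun w => pd i (fun v : Fin n → ℝ => (∑ j, v j) ^ a * MvPolynomial.eval v p) w) z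
      = a * (a - 1) * (∑ j, z j) ^ (a - 2) * MvPolynomial.eval z p
        + 2 * a * (∑ j, z j) ^ (a - 1) * MvPolynomial.eval z (MvPolynomial.pderiv i p)
        + (∑ j, z j) ^ a
          * MvPolynomial.eval z (MvPolynomial.pderiv i (MvPolynomial.pderiv i p)) := by
  set g : (Fin n → ℝ) → ℝ := fun w =>
    (∑ j, w j) ^ (a - 1) * MvPolynomial.eval w (MvPolynomial.C a * p)
      + (∑ j, w j) ^ a * MvPolynomial.eval w (MvPolynomial.pderiv i p) with hg
  have heq : (fun w => pd i (fun v : Fin n → ℝ =>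
      (∑ j, v j) ^ a * MvPolynomial.eval v p) w) =ᶠ[nhds z] g := by
    filter_upwards [(isOpen_pos_sum n).mem_nhds hz] with w hw
    rw [pd_prod i a p hw, hg]
    simp only [MvPolynomial.eval_mul, MvPolynomial.eval_C]
    ring
  have hgd : HasFDerivAt g
      ((MvPolynomial.eval z (MvPolynomial.C a * p)) • (((a-1) * (∑ j, z j) ^ (a - 1 - 1)) • So n)
        + ((∑ j, z j) ^ (a-1)) • Dp (MvPolynomial.C a * p) z
        + ((MvPolynomial.eval z (MvPolynomial.pderiv i p)) • ((a * (∑ j, z j) ^ (a - 1)) • So n)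
          + ((∑ j, z j) ^ a) • Dp (MvPolynomial.pderiv i p) z)) z :=
    (hasFDerivAt_prod (a-1) (MvPolynomial.C a * p) hz).add
      (hasFDerivAt_prod a (MvPolynomial.pderiv i p) hz)
  have hrfl : pd i (fun w => pd i (fun v : Fin n → ℝ =>
      (∑ j, v j) ^ a * MvPolynomial.eval v p) w) z
      = fderiv ℝ (fun w => pd i (fun v : Fin n → ℝ =>
        (∑ j, v j) ^ a * MvPolynomial.eval v p) w) z (Pi.single i 1) := rfl
  rw [hrfl, heq.fderiv_eq, hgd.fderiv]
  have h2 : a - 1 - 1 = a - 2 := by ring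
  simp only [h2, ContinuousLinearMap.add_apply, ContinuousLinearMap.smul_apply,
    Dp_apply, So_apply, smul_eq_mul, Pi.single_apply, mul_ite, mul_one, mul_zero,
    Finset.sum_ite_eq', Finset.mem_univ, if_true, MvPolynomial.eval_mul,
    MvPolynomial.eval_C, MvPolynomial.pderiv_C_mul]
  ring

lemma euler {n m : ℕ} {p : MvPolynomial (Fin n) ℝ}
    (hp : ∀ α : ℝ, 0 < α → ∀ z : Fin n → ℝ,
      MvPolynomial.eval (α • z) p = α ^ m * MvPolynomial.eval z p) (z : Fin n → ℝ) :
    ∑ i, z i * MvPolynomial.eval z (MvPolynomial.pderiv i p)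
      = m * MvPolynomial.eval z p := by
  have hsm : HasDerivAt (fun α : ℝ => α • z) z 1 := by
    simpa using (hasDerivAt_id (1:ℝ)).smul_const z
  have h1 : HasDerivAt (fun α : ℝ => MvPolynomial.eval (α • z) p) (Dp p z z) 1 := by
    have := (hasFDerivAt_eval p ((1:ℝ) • z)).comp_hasDerivAt 1 hsm
    simp only [one_smul] at this
    exact this
  have h2 : HasDerivAt (fun α : ℝ => α ^ m * MvPolynomial.eval z p)
      ((m : ℝ) * MvPolynomial.eval z p) 1 := by
    simpa using (hasDerivAt_pow m (1:ℝ)).mul_const (MvPolynomial.eval z p)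
  have heq : (fun α : ℝ => MvPolynomial.eval (α • z) p)
      =ᶠ[nhds 1] (fun α : ℝ => α ^ m * MvPolynomial.eval z p) := by
    filter_upwards [isOpen_Ioi.mem_nhds (show (0:ℝ) < 1 by norm_num)] with α hα
    exact hp α hα z
  have h2' : HasDerivAt (fun α : ℝ => MvPolynomial.eval (α • z) p)
      ((m : ℝ) * MvPolynomial.eval z p) 1 := h2.congr_of_eventuallyEq heq
  have := h1.unique h2'
  rw [Dp_apply] at this
  rw [← this]
  apply Finset.sum_congr rfl; intro j _; ring

/-- if `p` is a polynomial homogeneous of degree `m`, then on the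
punctured nonnegative orthant,
`L((∑ zᵢ)^(1−θ₀/2−2m) p(z)) = (∑ zᵢ)^(1−θ₀/2−2m) L p(z)`. -/
theorem stmt1 (n : ℕ) (θ : Fin n → ℝ) (hθ : ∀ i, 0 ≤ θ i) (m : ℕ)
    (p : MvPolynomial (Fin n) ℝ)
    (hp : ∀ α : ℝ, 0 < α → ∀ z : Fin n → ℝ,
      MvPolynomial.eval (α • z) p = α ^ m * MvPolynomial.eval z p)
    (z : Fin n → ℝ) (hz : ∀ i, 0 ≤ z i) (hz0 : z ≠ 0) :
    Lop θ (fun w => (∑ i, w i) ^ ((1 : ℝ) - (∑ i, θ i) / 2 - 2 * m)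
        * MvPolynomial.eval w p) z
      = (∑ i, z i) ^ ((1 : ℝ) - (∑ i, θ i) / 2 - 2 * m)
        * Lop θ (fun w => MvPolynomial.eval w p) z := by
  have hs : 0 < ∑ i, z i := by
    obtain ⟨j, hj⟩ := Function.ne_iff.mp hz0
    exact Finset.sum_pos' (fun i _ => hz i)
      ⟨j, Finset.mem_univ j, lt_of_le_of_ne (hz j) (Ne.symm hj)⟩
  set a : ℝ := (1 : ℝ) - (∑ i, θ i) / 2 - 2 * m with ha
  set X : ℝ := ∑ i, z i with hX
  have hB : X ^ (a - 2) * X = X ^ (a - 1) := by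
    rw [← Real.rpow_add_one hs.ne' (a - 2)]; ring_nf
  have hA : X ^ (a - 1) * X = X ^ a := by
    rw [← Real.rpow_add_one hs.ne' (a - 1)]; ring_nf
  have hconst : (∑ i, θ i) + 2 * a - 2 + 4 * (m : ℝ) = 0 := by rw [ha]; ring
  have heu := euler hp z
  have e1 : ∀ i : Fin n, pd i (fun w => (∑ j, w j) ^ a * MvPolynomial.eval w p) z
      = MvPolynomial.eval z p * (a * X ^ (a - 1))
        + X ^ a * MvPolynomial.eval z (MvPolynomial.pderiv i p) :=
    fun i => pd_prod i a p hs
  have e2 : ∀ i : Fin n,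
      pd i (fun w => pd i (fun v => (∑ j, v j) ^ a * MvPolynomial.eval v p) w) z
      = a * (a - 1) * X ^ (a - 2) * MvPolynomial.eval z p
        + 2 * a * X ^ (a - 1) * MvPolynomial.eval z (MvPolynomial.pderiv i p)
        + X ^ a * MvPolynomial.eval z (MvPolynomial.pderiv i (MvPolynomial.pderiv i p)) :=
    fun i => pd_pd_prod i a p hs
  have e3 : ∀ i : Fin n, pd i (fun w => MvPolynomial.eval w p) z
      = MvPolynomial.eval z (MvPolynomial.pderiv i p) := fun i => pd_eval i p z
  have e4 : ∀ i : Fin n,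
      pd i (fun w => pd i (fun v => MvPolynomial.eval v p) w) z
      = MvPolynomial.eval z (MvPolynomial.pderiv i (MvPolynomial.pderiv i p)) := by
    intro i
    have hfun : (fun w => pd i (fun v => MvPolynomial.eval v p) w)
        = fun w => MvPolynomial.eval w (MvPolynomial.pderiv i p) :=
      funext fun w => pd_eval i p w
    rw [hfun, pd_eval]
  simp only [Lop, e1, e2, e3, e4]
  have s1 : ∑ i, θ i * (MvPolynomial.eval z p * (a * X ^ (a - 1))
        + X ^ a * MvPolynomial.eval z (MvPolynomial.pderiv i p))
      = (∑ i, θ i) * (MvPolynomial.eval z p * (a * X ^ (a - 1)))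
        + X ^ a * ∑ i, θ i * MvPolynomial.eval z (MvPolynomial.pderiv i p) := by
    simp only [mul_add]
    rw [Finset.sum_add_distrib, ← Finset.sum_mul, Finset.mul_sum]
    congr 1
    exact Finset.sum_congr rfl fun i _ => by ring
  have s2 : ∑ i, z i * (a * (a - 1) * X ^ (a - 2) * MvPolynomial.eval z p
        + 2 * a * X ^ (a - 1) * MvPolynomial.eval z (MvPolynomial.pderiv i p)
        + X ^ a * MvPolynomial.eval z (MvPolynomial.pderiv i (MvPolynomial.pderiv i p)))
      = (a * (a - 1) * X ^ (a - 2) * MvPolynomial.eval z p) * X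
        + (2 * a * X ^ (a - 1))
            * ∑ i, z i * MvPolynomial.eval z (MvPolynomial.pderiv i p)
        + X ^ a * ∑ i, z i
            * MvPolynomial.eval z (MvPolynomial.pderiv i (MvPolynomial.pderiv i p)) := by
    have hterm : ∀ i : Fin n, z i * (a * (a - 1) * X ^ (a - 2) * MvPolynomial.eval z p
        + 2 * a * X ^ (a - 1) * MvPolynomial.eval z (MvPolynomial.pderiv i p)
        + X ^ a * MvPolynomial.eval z (MvPolynomial.pderiv i (MvPolynomial.pderiv i p)))
        = (a * (a - 1) * X ^ (a - 2) * MvPolynomial.eval z p) * z i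
          + (2 * a * X ^ (a - 1)) * (z i * MvPolynomial.eval z (MvPolynomial.pderiv i p))
          + X ^ a * (z i
            * MvPolynomial.eval z (MvPolynomial.pderiv i (MvPolynomial.pderiv i p))) :=
      fun i => by ring
    rw [Finset.sum_congr rfl fun i _ => hterm i, Finset.sum_add_distrib,
      Finset.sum_add_distrib, ← Finset.mul_sum, ← Finset.mul_sum, ← Finset.mul_sum,
      ← hX]
  rw [s1, s2, heu]
  linear_combination (2 * a * (a - 1) * (MvPolynomial.eval z p)) * hB
    + (a * (MvPolynomial.eval z p) * X ^ (a - 1)) * hconst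
end

section
/- Let u be C² on a domain D ⊆ ℝ₊ⁿ \ {0}, and define the generalized Kelvin transform K[u](z) = (∑_i z_i)^{1−θ₀/2} u(I(z)) on I(D), where I(z) = z/(∑_i z_i)². If u satisfies L u = 0 on D, then K[u] satisfies L K[u] = 0 on I(D), where L = ∑_i θ_i ∂_i + 2∑_i z_i ∂_i² and θ₀ = ∑_i θ_i > 2. More generally, L K[u](z) = K[Ψ](z) where Ψ(z) = (∑_i z_i)² L u(z). -/
open Finset

/-- The inversion map `I(z) = z / (∑ zᵢ)²`. -/
noncomputable def invMap {n : ℕ} (z : Fin n → ℝ) : Fin n → ℝ :=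
  fun i => z i / (∑ j, z j) ^ 2

/-- The generalized Kelvin transform `K[u](z) = (∑ zᵢ)^(1−θ₀/2) u(I(z))`. -/
noncomputable def kelvin {n : ℕ} (θ : Fin n → ℝ) (u : (Fin n → ℝ) → ℝ)
    (z : Fin n → ℝ) : ℝ :=
  (∑ i, z i) ^ ((1 : ℝ) - (∑ i, θ i) / 2) * u (invMap z)

noncomputable def Lsum (n : ℕ) : (Fin n → ℝ) →L[ℝ] ℝ :=
  ∑ j : Fin n, ContinuousLinearMap.proj j

lemma Lsum_apply {n : ℕ} (v : Fin n → ℝ) : Lsum n v = ∑ j, v j := by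
  simp [Lsum]

lemma hasFDerivAt_sumFun {n : ℕ} (w : Fin n → ℝ) :
    HasFDerivAt (fun w' : Fin n → ℝ => ∑ j, w' j) (Lsum n) w := by
  have h : (fun w' : Fin n → ℝ => ∑ j, w' j) = fun w' => Lsum n w' := by
    funext w'; rw [Lsum_apply]
  rw [h]
  exact (Lsum n).hasFDerivAt

lemma clm_eval {n : ℕ} (L : (Fin n → ℝ) →L[ℝ] ℝ) (v : Fin n → ℝ) :
    L v = ∑ j, v j * L (Pi.single j 1) := by
  have hv : v = ∑ j, (v j) • (Pi.single j 1 : Fin n → ℝ) := by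
    funext k
    simp [Finset.sum_apply, Pi.single_apply]
  nth_rewrite 1 [hv]
  rw [map_sum]
  simp [smul_eq_mul]

noncomputable def Dinv {n : ℕ} (w : Fin n → ℝ) : (Fin n → ℝ) →L[ℝ] (Fin n → ℝ) :=
  (((∑ j, w j) ^ 2)⁻¹ • ContinuousLinearMap.id ℝ (Fin n → ℝ)) +
    ((-(2 / (∑ j, w j) ^ 3)) • Lsum n).smulRight w

lemma hasFDerivAt_invMap {n : ℕ} (w : Fin n → ℝ) (hw : 0 < ∑ j, w j) :
    HasFDerivAt (invMap (n := n)) (Dinv w) w := by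
  have hfun : (invMap (n := n)) = fun w' : Fin n → ℝ => ((∑ j, w' j) ^ 2)⁻¹ • w' := by
    funext w' i
    simp [invMap, div_eq_mul_inv, mul_comm]
  have hc : HasFDerivAt (fun w' : Fin n → ℝ => ((∑ j, w' j) ^ 2)⁻¹)
      ((-(2 / (∑ j, w j) ^ 3)) • Lsum n) w := by
    have h := ((hasDerivAt_pow 2 (∑ j, w j)).inv (by positivity)).comp_hasFDerivAt w
      (hasFDerivAt_sumFun w)
    refine h.congr_fderiv ?_
    congr 1
    have := hw.ne'
    field_simp
    ring
  have h2 := hc.smul (hasFDerivAt_id w)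
  rw [hfun]
  exact h2

lemma Dinv_single {n : ℕ} (w : Fin n → ℝ) (i : Fin n) :
    Dinv w (Pi.single i 1) =
      ((∑ j, w j) ^ 2)⁻¹ • (Pi.single i 1 : Fin n → ℝ) + (-(2 / (∑ j, w j) ^ 3)) • w := by
  simp [Dinv, Lsum_apply, Pi.single_apply]

lemma clm_Dinv {n : ℕ} (L : (Fin n → ℝ) →L[ℝ] ℝ) (w : Fin n → ℝ) (i : Fin n) :
    L (Dinv w (Pi.single i 1)) =
      ((∑ j, w j) ^ 2)⁻¹ * L (Pi.single i 1)
        - 2 / (∑ j, w j) ^ 3 * ∑ j, w j * L (Pi.single j 1) := by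
  rw [Dinv_single, map_add, map_smul, map_smul, clm_eval L w]
  simp [smul_eq_mul]
  ring

lemma clm2_Dinv {n : ℕ} (B : (Fin n → ℝ) →L[ℝ] ((Fin n → ℝ) →L[ℝ] ℝ)) (w : Fin n → ℝ)
    (i j : Fin n) :
    B (Dinv w (Pi.single i 1)) (Pi.single j 1)
      = ((∑ k, w k) ^ 2)⁻¹ * B (Pi.single i 1) (Pi.single j 1)
        - 2 / (∑ k, w k) ^ 3 * ∑ k, w k * B (Pi.single k 1) (Pi.single j 1) := by
  have h := clm_Dinv ((ContinuousLinearMap.apply ℝ ℝ (Pi.single j 1)).comp B) w i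
  simpa using h

lemma sum_affine2 {n : ℕ} (z f : Fin n → ℝ) (A B : ℝ) :
    ∑ i, z i * (A + B * f i) = (∑ i, z i) * A + B * ∑ i, z i * f i := by
  have h : ∀ i : Fin n, z i * (A + B * f i) = z i * A + B * (z i * f i) := fun i => by ring
  simp only [h]
  rw [Finset.sum_add_distrib, ← Finset.sum_mul, ← Finset.mul_sum]

lemma sum_affine5 {n : ℕ} (z f g h k : Fin n → ℝ) (A B C D E : ℝ) :
    ∑ i, z i * (A + B * f i + C * g i + D * h i + E * k i)
      = (∑ i, z i) * A + B * (∑ i, z i * f i) + C * (∑ i, z i * g i)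
        + D * (∑ i, z i * h i) + E * (∑ i, z i * k i) := by
  have h' : ∀ i : Fin n, z i * (A + B * f i + C * g i + D * h i + E * k i)
      = z i * A + B * (z i * f i) + C * (z i * g i) + D * (z i * h i) + E * (z i * k i) :=
    fun i => by ring
  simp only [h']
  rw [Finset.sum_add_distrib, Finset.sum_add_distrib, Finset.sum_add_distrib,
    Finset.sum_add_distrib, ← Finset.sum_mul, ← Finset.mul_sum, ← Finset.mul_sum,
    ← Finset.mul_sum, ← Finset.mul_sum]


lemma sum_lin2 {n : ℕ} (z f g : Fin n → ℝ) (A B : ℝ) :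
    ∑ j, z j * (A * f j - B * g j) = A * (∑ j, z j * f j) - B * (∑ j, z j * g j) := by
  have h : ∀ j : Fin n, z j * (A * f j - B * g j) = A * (z j * f j) - B * (z j * g j) :=
    fun j => by ring
  simp only [h]
  rw [Finset.sum_sub_distrib, ← Finset.mul_sum, ← Finset.mul_sum]

set_option maxHeartbeats 2000000 in
lemma core {n : ℕ} (θ : Fin n → ℝ) (a : ℝ) (ha : a = 1 - (∑ i, θ i) / 2)
    (U : Set (Fin n → ℝ)) (hUopen : IsOpen U)
    (u : (Fin n → ℝ) → ℝ) (hu : ContDiffOn ℝ 2 u U)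
    (z : Fin n → ℝ) (hzpos : 0 < ∑ j, z j) (hzU : invMap z ∈ U) :
    Lop θ (fun w => (∑ j, w j) ^ a * u (invMap w)) z
      = (∑ j, z j) ^ a * ((∑ j, invMap z j) ^ 2 * Lop θ u (invMap z)) := by
  classical
  have hs := hzpos.ne'
  -- the open set V on which we control first derivatives
  set V : Set (Fin n → ℝ) := {w | 0 < ∑ j, w j} ∩ invMap ⁻¹' U with hV
  have hposopen : IsOpen {w : Fin n → ℝ | 0 < ∑ j, w j} :=
    isOpen_lt continuous_const (continuous_finset_sum _ fun j _ => continuous_apply j)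
  have hinvcont : ContinuousOn (invMap (n := n)) {w | 0 < ∑ j, w j} := by
    apply continuousOn_pi.2
    intro i
    exact ((continuous_apply i).continuousOn).div
      (((continuous_finset_sum _ fun j _ => continuous_apply j).pow 2).continuousOn)
      (fun w hw => pow_ne_zero 2 (ne_of_gt hw))
  have hVopen : IsOpen V := hinvcont.isOpen_inter_preimage hposopen hUopen
  have hzV : z ∈ V := ⟨hzpos, hzU⟩
  have hdiffu : ∀ w ∈ V, DifferentiableAt ℝ u (invMap w) := fun w hw =>
    (hu.contDiffAt (hUopen.mem_nhds hw.2)).differentiableAt (by norm_num)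
  have hKder : ∀ w ∈ V, HasFDerivAt (fun w' : Fin n → ℝ => (∑ j, w' j) ^ a * u (invMap w'))
      (((∑ j, w j) ^ a) • ((fderiv ℝ u (invMap w)).comp (Dinv w)) +
        (u (invMap w)) • ((a * (∑ j, w j) ^ (a - 1)) • Lsum n)) w := by
    intro w hw
    have hw1 : 0 < ∑ j, w j := hw.1
    have h1 : HasFDerivAt (fun w' : Fin n → ℝ => (∑ j, w' j) ^ a)
        ((a * (∑ j, w j) ^ (a - 1)) • Lsum n) w :=
      (hasFDerivAt_sumFun w).rpow_const (Or.inl hw1.ne')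
    have h2 : HasFDerivAt (fun w' : Fin n → ℝ => u (invMap w'))
        ((fderiv ℝ u (invMap w)).comp (Dinv w)) w :=
      ((hdiffu w hw).hasFDerivAt).comp w (hasFDerivAt_invMap w hw1)
    exact h1.mul h2
  have hpow : ∀ w : Fin n → ℝ, 0 < ∑ j, w j → ∀ k : ℕ,
      (∑ j, w j) ^ (a - (k:ℝ)) = (∑ j, w j) ^ a / (∑ j, w j) ^ k := by
    intro w hw k
    rw [Real.rpow_sub hw, Real.rpow_natCast]
  have hpdK : ∀ (i : Fin n), ∀ w ∈ V,
      pd i (fun w' : Fin n → ℝ => (∑ j, w' j) ^ a * u (invMap w')) w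
        = a * ((∑ j, w j) ^ (a - 1) * u (invMap w))
          + (∑ j, w j) ^ (a - 2) * fderiv ℝ u (invMap w) (Pi.single i 1)
          - 2 * ((∑ j, w j) ^ (a - 3) * ∑ j, w j * fderiv ℝ u (invMap w) (Pi.single j 1)) := by
    intro i w hw
    have hw1 : 0 < ∑ j, w j := hw.1
    have h := (hKder w hw).fderiv
    rw [pd, h]
    simp only [ContinuousLinearMap.add_apply, ContinuousLinearMap.smul_apply,
      ContinuousLinearMap.coe_comp', Function.comp_apply, smul_eq_mul]
    rw [clm_Dinv]
    have hL1 : Lsum n (Pi.single i (1:ℝ)) = 1 := by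
      simp [Lsum_apply, Pi.single_apply]
    rw [hL1]
    have e1 : (∑ j, w j) ^ (a - 1) = (∑ j, w j) ^ a / (∑ j, w j) := by
      have h' := hpow w hw1 1; push_cast at h'; simpa using h'
    have e2 : (∑ j, w j) ^ (a - 2) = (∑ j, w j) ^ a / (∑ j, w j) ^ 2 := by
      have h' := hpow w hw1 2; push_cast at h'; simpa using h'
    have e3 : (∑ j, w j) ^ (a - 3) = (∑ j, w j) ^ a / (∑ j, w j) ^ 3 := by
      have h' := hpow w hw1 3; push_cast at h'; simpa using h'
    rw [e1, e2, e3]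
    have h0 := hw1.ne'
    field_simp
    ring
  have hcd2 : ContDiffAt ℝ 2 u (invMap z) := hu.contDiffAt (hUopen.mem_nhds hzU)
  have hBdiff : DifferentiableAt ℝ (fderiv ℝ u) (invMap z) :=
    (hcd2.fderiv_right (m := 1) (by norm_num)).differentiableAt one_ne_zero
  have hB : HasFDerivAt (fderiv ℝ u) (fderiv ℝ (fderiv ℝ u) (invMap z)) (invMap z) :=
    hBdiff.hasFDerivAt
  have hgj : ∀ v : Fin n → ℝ, HasFDerivAt (fun y' => fderiv ℝ u y' v)
      ((ContinuousLinearMap.apply ℝ ℝ v).comp (fderiv ℝ (fderiv ℝ u) (invMap z))) (invMap z) :=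
    fun v => (ContinuousLinearMap.apply ℝ ℝ v).hasFDerivAt.comp (invMap z) hB
  have hsecond : ∀ i : Fin n,
      pd i (fun w => pd i (fun w' : Fin n → ℝ => (∑ j, w' j) ^ a * u (invMap w')) w) z
        = (a * (a-1) * ((∑ j, z j) ^ a / (∑ j, z j) ^ 2) * u (invMap z)
            - (2*a + 2*(a-3)) * ((∑ j, z j) ^ a / (∑ j, z j) ^ 4)
                * (∑ j, z j * fderiv ℝ u (invMap z) (Pi.single j 1))
            + 4 * ((∑ j, z j) ^ a / (∑ j, z j) ^ 6)
                * (∑ j, z j * ∑ k, z k * fderiv ℝ (fderiv ℝ u) (invMap z) (Pi.single k 1) (Pi.single j 1)))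
          + (2*a - 4) * ((∑ j, z j) ^ a / (∑ j, z j) ^ 3) * fderiv ℝ u (invMap z) (Pi.single i 1)
          + ((∑ j, z j) ^ a / (∑ j, z j) ^ 4) * fderiv ℝ (fderiv ℝ u) (invMap z) (Pi.single i 1) (Pi.single i 1)
          + (-2 * ((∑ j, z j) ^ a / (∑ j, z j) ^ 5)) * (∑ k, z k * fderiv ℝ (fderiv ℝ u) (invMap z) (Pi.single k 1) (Pi.single i 1))
          + (-2 * ((∑ j, z j) ^ a / (∑ j, z j) ^ 5)) * (∑ j, z j * fderiv ℝ (fderiv ℝ u) (invMap z) (Pi.single i 1) (Pi.single j 1)) := by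
    intro i
    have hmem : V ∈ nhds z := hVopen.mem_nhds hzV
    have heq : (fun w => pd i (fun w' : Fin n → ℝ => (∑ j, w' j) ^ a * u (invMap w')) w)
        =ᶠ[nhds z] (fun w =>
          a * ((∑ j, w j) ^ (a - 1) * u (invMap w))
          + (∑ j, w j) ^ (a - 2) * fderiv ℝ u (invMap w) (Pi.single i 1)
          - 2 * ((∑ j, w j) ^ (a - 3) * ∑ j, w j * fderiv ℝ u (invMap w) (Pi.single j 1))) :=
      Filter.eventuallyEq_of_mem hmem (fun w hw => hpdK i w hw)
    have hfd := heq.fderiv_eq (𝕜 := ℝ)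
    have hinvz := hasFDerivAt_invMap z hzpos
    have hu1 : HasFDerivAt (fun w : Fin n → ℝ => u (invMap w))
        ((fderiv ℝ u (invMap z)).comp (Dinv z)) z :=
      ((hdiffu z hzV).hasFDerivAt).comp z hinvz
    have hP : ∀ p : ℝ, HasFDerivAt (fun w : Fin n → ℝ => (∑ j, w j) ^ p)
        ((p * (∑ j, z j) ^ (p - 1)) • Lsum n) z :=
      fun p => (hasFDerivAt_sumFun z).rpow_const (Or.inl hzpos.ne')
    have hCj : ∀ j : Fin n, HasFDerivAt
        (fun w : Fin n → ℝ => fderiv ℝ u (invMap w) (Pi.single j 1))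
        (((ContinuousLinearMap.apply ℝ ℝ (Pi.single j 1)).comp
          (fderiv ℝ (fderiv ℝ u) (invMap z))).comp (Dinv z)) z :=
      fun j => (hgj (Pi.single j 1)).comp z hinvz
    have hWd : HasFDerivAt
        (fun w : Fin n → ℝ => ∑ j, w j * fderiv ℝ u (invMap w) (Pi.single j 1))
        (∑ j, ((z j) • (((ContinuousLinearMap.apply ℝ ℝ (Pi.single j 1)).comp
            (fderiv ℝ (fderiv ℝ u) (invMap z))).comp (Dinv z))
          + (fderiv ℝ u (invMap z) (Pi.single j 1)) • (ContinuousLinearMap.proj j))) z := by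
      apply HasFDerivAt.fun_sum
      intro j _
      exact (ContinuousLinearMap.proj j).hasFDerivAt.mul (hCj j)
    have hFd := ((((hP (a-1)).fun_mul hu1).const_mul a).fun_add ((hP (a-2)).fun_mul (hCj i))).fun_sub
      (((hP (a-3)).fun_mul hWd).const_mul 2)
    rw [pd, hfd, hFd.fderiv]
    simp only [ContinuousLinearMap.add_apply, ContinuousLinearMap.sub_apply,
      ContinuousLinearMap.smul_apply, ContinuousLinearMap.coe_comp', Function.comp_apply,
      ContinuousLinearMap.sum_apply, ContinuousLinearMap.proj_apply,
      ContinuousLinearMap.apply_apply, smul_eq_mul]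
    rw [clm_Dinv]
    simp only [clm2_Dinv]
    have hL1 : Lsum n (Pi.single i (1:ℝ)) = 1 := by
      simp [Lsum_apply, Pi.single_apply]
    rw [hL1]
    rw [Finset.sum_add_distrib]
    have hite : ∑ j, fderiv ℝ u (invMap z) (Pi.single j 1) * ((Pi.single i 1 : Fin n → ℝ) j)
        = fderiv ℝ u (invMap z) (Pi.single i 1) := by
      simp [Pi.single_apply, mul_ite]
    rw [hite]
    rw [sum_lin2 z (fun j => fderiv ℝ (fderiv ℝ u) (invMap z) (Pi.single i 1) (Pi.single j 1))
      (fun j => ∑ k, z k * fderiv ℝ (fderiv ℝ u) (invMap z) (Pi.single k 1) (Pi.single j 1))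
      (((∑ j, z j) ^ 2)⁻¹) (2 / (∑ j, z j) ^ 3)]
    have f1 : a - 1 - 1 = a - 2 := by ring
    have f2 : a - 2 - 1 = a - 3 := by ring
    have f3 : a - 3 - 1 = a - 4 := by ring
    rw [f1, f2, f3]
    have e1 : (∑ j, z j) ^ (a - 1) = (∑ j, z j) ^ a / (∑ j, z j) := by
      have h' := hpow z hzpos 1; push_cast at h'; simpa using h'
    have e2 : (∑ j, z j) ^ (a - 2) = (∑ j, z j) ^ a / (∑ j, z j) ^ 2 := by
      have h' := hpow z hzpos 2; push_cast at h'; simpa using h'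
    have e3 : (∑ j, z j) ^ (a - 3) = (∑ j, z j) ^ a / (∑ j, z j) ^ 3 := by
      have h' := hpow z hzpos 3; push_cast at h'; simpa using h'
    have e4 : (∑ j, z j) ^ (a - 4) = (∑ j, z j) ^ a / (∑ j, z j) ^ 4 := by
      have h' := hpow z hzpos 4; push_cast at h'; simpa using h'
    rw [e1, e2, e3, e4]
    field_simp
    ring
  have hfirst : ∀ i : Fin n,
      pd i (fun w' : Fin n → ℝ => (∑ j, w' j) ^ a * u (invMap w')) z
        = (a * ((∑ j, z j) ^ a / (∑ j, z j)) * u (invMap z)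
            - 2 * ((∑ j, z j) ^ a / (∑ j, z j) ^ 3)
              * (∑ j, z j * fderiv ℝ u (invMap z) (Pi.single j 1)))
          + ((∑ j, z j) ^ a / (∑ j, z j) ^ 2) * fderiv ℝ u (invMap z) (Pi.single i 1) := by
    intro i
    rw [hpdK i z hzV]
    have e1 : (∑ j, z j) ^ (a - 1) = (∑ j, z j) ^ a / (∑ j, z j) := by
      have h' := hpow z hzpos 1; push_cast at h'; simpa using h'
    have e2 : (∑ j, z j) ^ (a - 2) = (∑ j, z j) ^ a / (∑ j, z j) ^ 2 := by
      have h' := hpow z hzpos 2; push_cast at h'; simpa using h'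
    have e3 : (∑ j, z j) ^ (a - 3) = (∑ j, z j) ^ a / (∑ j, z j) ^ 3 := by
      have h' := hpow z hzpos 3; push_cast at h'; simpa using h'
    rw [e1, e2, e3]
    ring
  have hduy : ∀ i : Fin n, pd i (fun w => pd i u w) (invMap z)
      = fderiv ℝ (fderiv ℝ u) (invMap z) (Pi.single i 1) (Pi.single i 1) := by
    intro i
    simp only [pd]
    rw [(hgj (Pi.single i 1)).fderiv]
    simp [ContinuousLinearMap.coe_comp', Function.comp_apply,
      ContinuousLinearMap.apply_apply]
  have hIsum : (∑ j, invMap z j) = (∑ j, z j)⁻¹ := by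
    simp only [invMap]
    rw [← Finset.sum_div]
    field_simp
  have hL : ∑ i, θ i * pd i (fun w' : Fin n → ℝ => (∑ j, w' j) ^ a * u (invMap w')) z
      = (∑ i, θ i) * (a * ((∑ j, z j) ^ a / (∑ j, z j)) * u (invMap z)
            - 2 * ((∑ j, z j) ^ a / (∑ j, z j) ^ 3)
              * (∑ j, z j * fderiv ℝ u (invMap z) (Pi.single j 1)))
        + ((∑ j, z j) ^ a / (∑ j, z j) ^ 2)
            * ∑ i, θ i * fderiv ℝ u (invMap z) (Pi.single i 1) := by
    simp only [hfirst]
    exact sum_affine2 θ (fun i => fderiv ℝ u (invMap z) (Pi.single i 1)) _ _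
  have hQsum : ∑ i, z i * pd i (fun w => pd i
        (fun w' : Fin n → ℝ => (∑ j, w' j) ^ a * u (invMap w')) w) z
      = (∑ i, z i) * (a * (a-1) * ((∑ j, z j) ^ a / (∑ j, z j) ^ 2) * u (invMap z)
            - (2*a + 2*(a-3)) * ((∑ j, z j) ^ a / (∑ j, z j) ^ 4)
                * (∑ j, z j * fderiv ℝ u (invMap z) (Pi.single j 1))
            + 4 * ((∑ j, z j) ^ a / (∑ j, z j) ^ 6)
                * (∑ j, z j * ∑ k, z k * fderiv ℝ (fderiv ℝ u) (invMap z) (Pi.single k 1) (Pi.single j 1)))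
        + ((2*a - 4) * ((∑ j, z j) ^ a / (∑ j, z j) ^ 3))
            * (∑ i, z i * fderiv ℝ u (invMap z) (Pi.single i 1))
        + ((∑ j, z j) ^ a / (∑ j, z j) ^ 4)
            * (∑ i, z i * fderiv ℝ (fderiv ℝ u) (invMap z) (Pi.single i 1) (Pi.single i 1))
        + (-2 * ((∑ j, z j) ^ a / (∑ j, z j) ^ 5))
            * (∑ i, z i * ∑ k, z k * fderiv ℝ (fderiv ℝ u) (invMap z) (Pi.single k 1) (Pi.single i 1))
        + (-2 * ((∑ j, z j) ^ a / (∑ j, z j) ^ 5))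
            * (∑ i, z i * ∑ j, z j * fderiv ℝ (fderiv ℝ u) (invMap z) (Pi.single i 1) (Pi.single j 1)) := by
    simp only [hsecond]
    exact sum_affine5 z _ _ _ _ _ _ _ _ _
  have hswap : ∑ i, z i * ∑ j, z j * fderiv ℝ (fderiv ℝ u) (invMap z) (Pi.single i 1) (Pi.single j 1)
      = ∑ i, z i * ∑ k, z k * fderiv ℝ (fderiv ℝ u) (invMap z) (Pi.single k 1) (Pi.single i 1) := by
    simp_rw [Finset.mul_sum]
    rw [Finset.sum_comm]
    exact Finset.sum_congr rfl fun i _ => Finset.sum_congr rfl fun j _ => by ring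
  have hRy : ∑ i, invMap z i * pd i (fun w => pd i u w) (invMap z)
      = (∑ i, z i * fderiv ℝ (fderiv ℝ u) (invMap z) (Pi.single i 1) (Pi.single i 1))
          / (∑ j, z j) ^ 2 := by
    simp only [hduy]
    rw [Finset.sum_div]
    refine Finset.sum_congr rfl fun i _ => ?_
    simp only [invMap]
    ring
  simp only [Lop]
  rw [hL, hQsum, hswap, hRy, hIsum]
  simp only [pd]
  rw [ha]
  field_simp
  ring

/-- if `u` is `C²` on an open set `U` inside the punctured
nonnegative orthant, then on `I(U)` one has `L K[u] = K[Ψ]` where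
`Ψ(z) = (∑ zᵢ)² L u(z)`; in particular if `L u = 0` on `U` then `L K[u] = 0`
on `I(U)`. -/
theorem stmt5 (n : ℕ) (θ : Fin n → ℝ) (hθ : ∀ i, 0 ≤ θ i) (hθ0 : 2 < ∑ i, θ i)
    (U : Set (Fin n → ℝ)) (hUopen : IsOpen U)
    (hU : U ⊆ {z | (∀ i, 0 ≤ z i) ∧ z ≠ 0})
    (u : (Fin n → ℝ) → ℝ) (hu : ContDiffOn ℝ 2 u U)
    (z : Fin n → ℝ) (hznn : ∀ i, 0 ≤ z i) (hz0 : z ≠ 0) (hzU : invMap z ∈ U) :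
    Lop θ (kelvin θ u) z
        = kelvin θ (fun w => (∑ i, w i) ^ 2 * Lop θ u w) z
      ∧ ((∀ w ∈ U, Lop θ u w = 0) → Lop θ (kelvin θ u) z = 0) := by
  have hex : ∃ i, z i ≠ 0 := by
    by_contra h
    push_neg at h
    exact hz0 (funext h)
  obtain ⟨i0, hi0⟩ := hex
  have hzpos : 0 < ∑ j, z j :=
    lt_of_lt_of_le ((hznn i0).lt_of_ne (Ne.symm hi0))
      (Finset.single_le_sum (fun j _ => hznn j) (Finset.mem_univ i0))
  have h1 := core θ ((1:ℝ) - (∑ i, θ i) / 2) rfl U hUopen u hu z hzpos hzU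
  have hk : kelvin θ u
      = fun w => (∑ j, w j) ^ ((1:ℝ) - (∑ i, θ i) / 2) * u (invMap w) := rfl
  have hmain : Lop θ (kelvin θ u) z
      = kelvin θ (fun w => (∑ i, w i) ^ 2 * Lop θ u w) z := by
    rw [hk]
    exact h1
  refine ⟨hmain, fun h0 => ?_⟩
  rw [hmain]
  have : kelvin θ (fun w => (∑ i, w i) ^ 2 * Lop θ u w) z
      = (∑ i, z i) ^ ((1:ℝ) - (∑ i, θ i) / 2)
          * ((∑ i, invMap z i) ^ 2 * Lop θ u (invMap z)) := rfl
  rw [this, h0 (invMap z) hzU]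
  ring
end

section
/- For 0 ≤ s < 1 and a positive integer r, with p = s/(1+s) and q = 1/(1+s), one has (1−s) ∑_{m=0}^∞ C(2m+r−1, m) p^m q^{m+r} = 1, where C(·,·) is the binomial coefficient. -/
open Finset

/-- Auxiliary sum: `D s n a = ∑_{k=0}^{n} C(n,k) s^{max(k, a-k)}`. -/
noncomputable def stmt9D (s : ℝ) (n a : ℕ) : ℝ :=
  ∑ k ∈ range (n + 1), ((n.choose k : ℝ)) * s ^ (max k (a - k))

lemma stmt9_pascal (n : ℕ) (f : ℕ → ℝ) :
    ∑ k ∈ range (n + 2), (((n + 1).choose k : ℝ)) * f k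
      = ∑ k ∈ range (n + 1), ((n.choose k : ℝ)) * (f k + f (k + 1)) := by
  rw [Finset.sum_range_succ' _ (n + 1)]
  have h1 : ∀ k, (((n + 1).choose (k + 1) : ℝ)) = (n.choose k : ℝ) + (n.choose (k + 1) : ℝ) := by
    intro k
    rw [Nat.choose_succ_succ]
    push_cast
    ring
  simp only [h1, Nat.choose_zero_right, Nat.cast_one, one_mul]
  have h2 : ∑ k ∈ range (n + 1), ((n.choose (k + 1) : ℝ)) * f (k + 1)
      = ∑ k ∈ range (n + 1), ((n.choose k : ℝ)) * f k - f 0 := by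
    have := Finset.sum_range_succ' (fun k => ((n.choose k : ℝ)) * f k) (n + 1)
    rw [Finset.sum_range_succ] at this
    simp only [Nat.choose_succ_self, Nat.cast_zero, zero_mul, add_zero,
      Nat.choose_zero_right, Nat.cast_one, one_mul] at this
    linarith [this]
  calc ∑ k ∈ range (n + 1), ((n.choose k : ℝ) + (n.choose (k + 1) : ℝ)) * f (k + 1) + f 0
      = ∑ k ∈ range (n + 1), ((n.choose k : ℝ)) * f (k + 1)
        + ∑ k ∈ range (n + 1), ((n.choose (k + 1) : ℝ)) * f (k + 1) + f 0 := by
        rw [← Finset.sum_add_distrib]; congr 1; apply Finset.sum_congr rfl; intros; ring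
    _ = ∑ k ∈ range (n + 1), ((n.choose k : ℝ)) * (f k + f (k + 1)) := by
        rw [h2]
        simp only [mul_add, Finset.sum_add_distrib]
        ring

lemma stmt9_stepA (s : ℝ) (n M : ℕ) (hM : M ≤ n) :
    (1 + s) * stmt9D s n (2 * M)
      = stmt9D s (n + 1) (2 * M + 1) + (1 - s) * s ^ M * (n.choose M : ℝ) := by
  have hpas := stmt9_pascal n (fun k => s ^ (max k (2 * M + 1 - k)))
  unfold stmt9D
  rw [hpas]
  rw [Finset.mul_sum]
  have key : ∀ k ∈ range (n + 1),
      (n.choose k : ℝ) * (s ^ (max k (2 * M + 1 - k)) + s ^ (max (k + 1) (2 * M + 1 - (k + 1))))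
        = (1 + s) * ((n.choose k : ℝ) * s ^ (max k (2 * M - k)))
          - (if k = M then (1 - s) * s ^ M * (n.choose M : ℝ) else 0) := by
    intro k _
    rcases lt_trichotomy k M with h | h | h
    · rw [if_neg (by omega)]
      have e1 : max k (2 * M + 1 - k) = (2 * M - k) + 1 := by omega
      have e2 : max (k + 1) (2 * M + 1 - (k + 1)) = 2 * M - k := by omega
      have e3 : max k (2 * M - k) = 2 * M - k := by omega
      rw [e1, e2, e3, pow_succ]
      ring
    · rw [if_pos h]
      have e1 : max k (2 * M + 1 - k) = k + 1 := by omega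
      have e2 : max (k + 1) (2 * M + 1 - (k + 1)) = k + 1 := by omega
      have e3 : max k (2 * M - k) = k := by omega
      rw [e1, e2, e3, ← h, pow_succ]
      ring
    · rw [if_neg (by omega)]
      have e1 : max k (2 * M + 1 - k) = k := by omega
      have e2 : max (k + 1) (2 * M + 1 - (k + 1)) = k + 1 := by omega
      have e3 : max k (2 * M - k) = k := by omega
      rw [e1, e2, e3, pow_succ]
      ring
  rw [Finset.sum_congr rfl key, Finset.sum_sub_distrib, Finset.sum_ite_eq' (range (n + 1)) M]
  rw [if_pos (by simp [Nat.lt_succ_iff, hM])]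
  ring

lemma stmt9_stepB (s : ℝ) (n M : ℕ) :
    (1 + s) * stmt9D s (n + 1) (2 * M + 1) = stmt9D s (n + 2) (2 * M + 2) := by
  have hpas := stmt9_pascal (n + 1) (fun k => s ^ (max k (2 * M + 2 - k)))
  unfold stmt9D
  rw [show n + 2 + 1 = n + 1 + 2 from rfl, hpas, Finset.mul_sum]
  apply Finset.sum_congr rfl
  intro k _
  rcases le_or_gt k M with h | h
  · have e1 : max k (2 * M + 2 - k) = (2 * M + 1 - k) + 1 := by omega
    have e2 : max (k + 1) (2 * M + 2 - (k + 1)) = 2 * M + 1 - k := by omega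
    have e3 : max k (2 * M + 1 - k) = 2 * M + 1 - k := by omega
    rw [e1, e2, e3, pow_succ]
    ring
  · have e1 : max k (2 * M + 2 - k) = k := by omega
    have e2 : max (k + 1) (2 * M + 2 - (k + 1)) = k + 1 := by omega
    have e3 : max k (2 * M + 1 - k) = k := by omega
    rw [e1, e2, e3, pow_succ]
    ring

/-- for `0 ≤ s < 1`, `r ≥ 1`, with `p = s/(1+s)` and `q = 1/(1+s)`,
`(1−s) ∑_{m=0}^∞ C(2m+r−1, m) pᵐ q^{m+r} = 1`. -/
theorem stmt9 (s : ℝ) (hs0 : 0 ≤ s) (hs1 : s < 1) (r : ℕ) (hr : 1 ≤ r) :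
    (1 - s) * ∑' m : ℕ,
        ((2 * m + r - 1).choose m : ℝ) * (s / (1 + s)) ^ m * (1 / (1 + s)) ^ (m + r)
      = 1 := by
  obtain ⟨u, rfl⟩ : ∃ u, r = u + 1 := ⟨r - 1, by omega⟩
  have hs : (0:ℝ) < 1 + s := by linarith
  have hsne : (1:ℝ) + s ≠ 0 := ne_of_gt hs
  set t : ℕ → ℝ := fun m =>
    ((2 * m + (u + 1) - 1).choose m : ℝ) * (s / (1 + s)) ^ m * (1 / (1 + s)) ^ (m + (u + 1))
    with ht
  have ht' : ∀ m, t m = ((2 * m + u).choose m : ℝ) * s ^ m / (1 + s) ^ (2 * m + u + 1) := by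
    intro m
    rw [ht]
    simp only [show 2 * m + (u + 1) - 1 = 2 * m + u from by omega]
    have hpw : ((1:ℝ) + s) ^ (2 * m + u + 1) = (1 + s) ^ m * (1 + s) ^ (m + (u + 1)) := by
      rw [← pow_add]
      congr 1
      omega
    rw [div_pow, one_div, inv_pow, hpw]
    have h1 : ((1:ℝ) + s) ^ m ≠ 0 := pow_ne_zero _ hsne
    have h2 : ((1:ℝ) + s) ^ (m + (u + 1)) ≠ 0 := pow_ne_zero _ hsne
    field_simp
    try ring
  -- partial sums identity
  have hpart : ∀ M : ℕ, (1 - s) * ∑ m ∈ range M, t m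
      = 1 - stmt9D s (2 * M + u) (2 * M) / (1 + s) ^ (2 * M + u) := by
    intro M
    induction M with
    | zero =>
      simp only [range_zero, Finset.sum_empty, mul_zero, mul_zero, zero_add]
      rw [eq_sub_iff_add_eq, zero_add, div_eq_one_iff_eq (pow_ne_zero _ hsne)]
      unfold stmt9D
      rw [show (1:ℝ) + s = s + 1 from by ring, add_pow]
      apply Finset.sum_congr rfl
      intro k hk
      have : max k (0 - k) = k := by omega
      rw [this]
      ring
    | succ M ih =>
      rw [Finset.sum_range_succ, mul_add, ih]
      have hA := stmt9_stepA s (2 * M + u) M (by omega)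
      have hB := stmt9_stepB s (2 * M + u) M
      have key : (1 + s) ^ 2 * stmt9D s (2 * M + u) (2 * M)
          = stmt9D s (2 * (M + 1) + u) (2 * (M + 1))
            + (1 + s) * ((1 - s) * s ^ M * (((2 * M + u).choose M : ℝ))) := by
        have h2 : 2 * (M + 1) + u = 2 * M + u + 2 := by ring
        have h3 : 2 * (M + 1) = 2 * M + 2 := by ring
        rw [h2, h3, ← hB]
        linear_combination (1 + s) * hA
      rw [ht' M]
      have hp1 : ((1:ℝ) + s) ^ (2 * M + u) ≠ 0 := pow_ne_zero _ hsne
      have hq2 : ((1:ℝ) + s) ^ (2 * M + u) * (1 + s) ^ 2 ≠ 0 := by positivity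
      have hq3 : ((1:ℝ) + s) ^ (2 * M + u) * (1 + s) ≠ 0 := by positivity
      have hexp : ((1:ℝ) + s) ^ (2 * (M + 1) + u) = (1 + s) ^ (2 * M + u) * (1 + s) ^ 2 := by
        rw [← pow_add]
        congr 1
        ring
      have hexp2 : ((1:ℝ) + s) ^ (2 * M + u + 1) = (1 + s) ^ (2 * M + u) * (1 + s) := pow_succ _ _
      rw [hexp, hexp2]
      have hstep : stmt9D s (2 * M + u) (2 * M) / (1 + s) ^ (2 * M + u)
          - stmt9D s (2 * (M + 1) + u) (2 * (M + 1)) / ((1 + s) ^ (2 * M + u) * (1 + s) ^ 2)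
          = (1 - s) * (((2 * M + u).choose M : ℝ) * s ^ M
              / ((1 + s) ^ (2 * M + u) * (1 + s))) := by
        rw [div_sub_div _ _ hp1 hq2, ← mul_div_assoc,
          div_eq_div_iff (mul_ne_zero hp1 hq2) hq3]
        linear_combination ((1 + s) ^ (2 * M + u)) ^ 2 * (1 + s) * key
      linarith [hstep]
  -- tail tends to zero
  have hDnonneg : ∀ n a, 0 ≤ stmt9D s n a := by
    intro n a
    apply Finset.sum_nonneg
    intro k _
    positivity
  have htail : Filter.Tendsto
      (fun M => stmt9D s (2 * M + u) (2 * M) / (1 + s) ^ (2 * M + u)) Filter.atTop (nhds 0) := by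
    set c : ℝ := 4 * s / (1 + s) ^ 2 with hc
    have hc0 : 0 ≤ c := by positivity
    have hc1 : c < 1 := by
      rw [hc, div_lt_one (by positivity)]
      nlinarith [sq_nonneg (1 - s)]
    set K : ℝ := 2 ^ u / (1 + s) ^ u with hK
    have hbound : ∀ M : ℕ, stmt9D s (2 * M + u) (2 * M) / (1 + s) ^ (2 * M + u)
        ≤ K * c ^ M := by
      intro M
      have hDle : stmt9D s (2 * M + u) (2 * M) ≤ s ^ M * 2 ^ (2 * M + u) := by
        unfold stmt9D
        calc ∑ k ∈ range (2 * M + u + 1), (((2 * M + u).choose k : ℝ)) * s ^ (max k (2 * M - k))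
            ≤ ∑ k ∈ range (2 * M + u + 1), (((2 * M + u).choose k : ℝ)) * s ^ M := by
              apply Finset.sum_le_sum
              intro k _
              apply mul_le_mul_of_nonneg_left _ (by positivity)
              exact pow_le_pow_of_le_one hs0 hs1.le (by omega)
          _ = s ^ M * 2 ^ (2 * M + u) := by
              rw [← Finset.sum_mul, mul_comm]
              congr 1
              rw [← Nat.cast_sum, Nat.sum_range_choose]
              push_cast
              ring
      have hden : (0:ℝ) < (1 + s) ^ (2 * M + u) := by positivity
      rw [div_le_iff₀ hden]
      have heq : K * c ^ M * (1 + s) ^ (2 * M + u) = s ^ M * 2 ^ (2 * M + u) := by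
        rw [hK, hc, div_pow, mul_pow]
        rw [show ((1:ℝ) + s) ^ (2 * M + u) = ((1 + s) ^ 2) ^ M * (1 + s) ^ u by
          rw [← pow_mul, ← pow_add]]
        rw [show ((2:ℝ)) ^ (2 * M + u) = 4 ^ M * 2 ^ u by
          rw [pow_add, pow_mul]; norm_num]
        have h1 : ((1:ℝ) + s) ^ 2 ≠ 0 := by positivity
        have h2 : ((1:ℝ) + s) ^ u ≠ 0 := pow_ne_zero _ hsne
        have h3 : (((1:ℝ) + s) ^ 2) ^ M ≠ 0 := pow_ne_zero _ h1
        field_simp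
      rw [heq]
      exact hDle
    have hlim : Filter.Tendsto (fun M : ℕ => K * c ^ M) Filter.atTop (nhds 0) := by
      have := (tendsto_pow_atTop_nhds_zero_of_lt_one (by linarith) hc1).const_mul K
      simpa using this
    exact squeeze_zero (fun M => div_nonneg (hDnonneg _ _) (by positivity)) hbound hlim
  -- conclude
  have hsum : Filter.Tendsto (fun M => ∑ m ∈ range M, t m) Filter.atTop (nhds (1 / (1 - s))) := by
    have h1s : (1:ℝ) - s ≠ 0 := by linarith
    have heq : (fun M => ∑ m ∈ range M, t m)
        = fun M => (1 - stmt9D s (2 * M + u) (2 * M) / (1 + s) ^ (2 * M + u)) / (1 - s) := by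
      funext M
      rw [eq_div_iff h1s, mul_comm, hpart M]
    rw [heq]
    have : Filter.Tendsto
        (fun M => (1 - stmt9D s (2 * M + u) (2 * M) / (1 + s) ^ (2 * M + u)) / (1 - s))
        Filter.atTop (nhds ((1 - 0) / (1 - s))) :=
      (tendsto_const_nhds.sub htail).div_const _
    simpa using this
  have htnn : ∀ m, 0 ≤ t m := by
    intro m
    rw [ht]
    positivity
  have hhs : HasSum t (1 / (1 - s)) :=
    (hasSum_iff_tendsto_nat_of_nonneg htnn _).mpr hsum
  rw [hhs.tsum_eq]
  have h1s : (1:ℝ) - s ≠ 0 := by linarith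
  field_simp
end
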